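/- With notation as above, the n rows of Γ + ω·I_n are linearly independent over F_2, so the graph code C(G), the F_2-span of these rows, has exactly 2^n elements. -/

import Mathlib

noncomputable section

/-- The field with 4 elements. -/
abbrev F4 := GaloisField 2 2

lemma F4_one_add_one : (1 : F4) + 1 = 0 := CharTwo.add_self_eq_zero 1

lemma zmod2_cases (a : ZMod 2) : a = 0 ∨ a = 1 := by fin_cases a; exacts [Or.inl rfl, Or.inr rfl]

lemma sum01 {α : Type*} [DecidableEq α] (s : Finset α) (f : α → F4)
    (hf : ∀ a ∈ s, f a = 0 ∨ f a = 1) : s.sum f = 0 ∨ s.sum f = 1 := by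
  induction s using Finset.induction_on with
  | empty => simp
  | @insert a s ha ih =>
    rw [Finset.sum_insert ha]
    rcases hf a (Finset.mem_insert_self a s) with h1 | h1 <;>
      rcases ih (fun x hx => hf x (Finset.mem_insert_of_mem hx)) with h2 | h2 <;>
      simp [h1, h2, F4_one_add_one]

/-- The `n` rows of `Γ + ω·I_n` (with `Γ` the adjacency matrix of a simple
graph and `ω² + ω + 1 = 0`) are linearly independent over `F_2`, so the graph
code, their `F_2`-span, has exactly `2^n` elements. -/
theorem graphCode_card {n : ℕ} (Γ : Matrix (Fin n) (Fin n) F4)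
    (hsym : Γ.IsSymm) (hdiag : ∀ i, Γ i i = 0)
    (h01 : ∀ i j, Γ i j = 0 ∨ Γ i j = 1)
    (ω : F4) (hω : ω ^ 2 + ω + 1 = 0)
    (M : Fin n → Fin n → F4)
    (hM : ∀ i j, M i j = Γ i j + ω * (if i = j then 1 else 0)) :
    LinearIndependent (ZMod 2) M ∧
      Nat.card (Submodule.span (ZMod 2) (Set.range M)) = 2 ^ n := by
  have hω0 : ω ≠ 0 := by rintro rfl; simp at hω
  have hω1 : ω ≠ 1 := by
    rintro rfl
    rw [one_pow, F4_one_add_one, zero_add] at hω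
    exact one_ne_zero hω
  have hind : LinearIndependent (ZMod 2) M := by
    rw [Fintype.linearIndependent_iff]
    intro g hg j
    have h := congrFun hg j
    simp only [Finset.sum_apply, Pi.smul_apply, Pi.zero_apply] at h
    set a : Fin n → F4 := fun c => algebraMap (ZMod 2) F4 (g c) with ha
    have hsmul : ∀ c, g c • M c j = a c * M c j := fun c => Algebra.smul_def _ _
    rw [Finset.sum_congr rfl (fun c _ => hsmul c)] at h
    have h' : (∑ c, a c * Γ c j) + a j * ω = 0 := by
      have key : ∀ c, a c * M c j = a c * Γ c j + (if c = j then a c * ω else 0) := by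
        intro c
        rw [hM c j, mul_add]
        congr 1
        split <;> simp [mul_comm]
      rw [Finset.sum_congr rfl (fun c _ => key c), Finset.sum_add_distrib,
        Finset.sum_ite_eq' Finset.univ j (fun c => a c * ω)] at h
      simpa using h
    by_contra hgj
    have hgj1 : g j = 1 := (zmod2_cases (g j)).resolve_left hgj
    have haj : a j = 1 := by rw [ha]; simp [hgj1]
    rw [haj, one_mul] at h'
    have hS : (∑ c, a c * Γ c j) = 0 ∨ (∑ c, a c * Γ c j) = 1 := by
      apply sum01
      intro c _
      rcases zmod2_cases (g c) with hc | hc <;>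
        rcases h01 c j with hcj | hcj <;> simp [ha, hc, hcj]
    have hωS : (∑ c, a c * Γ c j) = ω := by rw [eq_neg_of_add_eq_zero_left h', CharTwo.neg_eq]
    rcases hS with hS | hS
    · exact hω0 (by rw [← hωS, hS])
    · exact hω1 (by rw [← hωS, hS])
  refine ⟨hind, ?_⟩
  have b := Module.Basis.span hind
  have e := b.repr.toEquiv.trans Finsupp.equivFunOnFinite
  rw [Nat.card_congr e, Nat.card_eq_fintype_card, Fintype.card_fun, ZMod.card,
    Fintype.card_fin]


end
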